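/- Let V : ℝⁿ → ℝ be twice continuously differentiable and let ‖·‖ be an arbitrary norm on ℝⁿ. If the gradient field f = ∇V is Lipschitz with constant L with respect to ‖·‖, i.e. ‖∇V(x) − ∇V(y)‖ ≤ L·‖x − y‖ for all x, y ∈ ℝⁿ, then ∇V is Lipschitz with constant L with respect to the Euclidean norm: ‖∇V(x) − ∇V(y)‖₂ ≤ L·‖x − y‖₂ for all x, y ∈ ℝⁿ. -/

import Mathlib

open scoped RealInnerProductSpace

section Aux

/-- A self-adjoint operator on a real inner product space whose powers satisfy a uniform
norm bound `‖Bᵐ v‖ ≤ C Lᵐ ‖v‖` satisfies `‖B v‖ ≤ L ‖v‖`. -/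
lemma selfadj_pow_bound {E : Type*} [NormedAddCommGroup E] [InnerProductSpace ℝ E]
    (B : E →L[ℝ] E) (hsym : ∀ u v, ⟪B u, v⟫ = ⟪u, B v⟫)
    (C L : ℝ) (hC : 0 < C) (hLnn : 0 ≤ L)
    (hpow : ∀ (m : ℕ) (v : E), ‖(B ^ m) v‖ ≤ C * L ^ m * ‖v‖) :
    ∀ v : E, ‖B v‖ ≤ L * ‖v‖ := by
  have hsymp : ∀ (m : ℕ) (u v : E), ⟪(B ^ m) u, v⟫ = ⟪u, (B ^ m) v⟫ := by
    intro m
    induction m with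
    | zero => intro u v; simp
    | succ k ih =>
      intro u v
      have : B ^ (k + 1) = B ^ k * B := by rw [pow_succ]
      simp only [this, ContinuousLinearMap.mul_apply]
      rw [ih, hsym]
      congr 1
      rw [← ContinuousLinearMap.mul_apply, ← ContinuousLinearMap.mul_apply, ← pow_succ, ← pow_succ']
  have key : ∀ (k : ℕ) (v : E), ‖B v‖ ^ (2 ^ k) * ‖v‖ ≤ ‖(B ^ (2 ^ k)) v‖ * ‖v‖ ^ (2 ^ k) := by
    intro k
    induction k with
    | zero => intro v; simp
    | succ k ih =>
      intro v
      rcases eq_or_ne ‖v‖ 0 with hv | hv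
      · rw [hv]
        simp only [mul_zero]
        positivity
      have hvpos : 0 < ‖v‖ := lt_of_le_of_ne (norm_nonneg v) (Ne.symm hv)
      set m := 2 ^ k with hm
      have h1 : (‖B v‖ ^ m * ‖v‖) ^ 2 ≤ (‖(B ^ m) v‖ * ‖v‖ ^ m) ^ 2 := by
        apply pow_le_pow_left₀ (by positivity) (ih v)
      have h2 : ‖(B ^ m) v‖ ^ 2 ≤ ‖(B ^ (2 * m)) v‖ * ‖v‖ := by
        have : (‖(B ^ m) v‖ : ℝ) ^ 2 = ⟪(B ^ m) v, (B ^ m) v⟫ :=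
          (real_inner_self_eq_norm_sq _).symm
        rw [this, hsymp]
        have hcomp : (B ^ m) ((B ^ m) v) = (B ^ (2 * m)) v := by
          rw [two_mul, pow_add, ContinuousLinearMap.mul_apply]
        rw [hcomp]
        calc ⟪v, (B ^ (2*m)) v⟫ ≤ ‖v‖ * ‖(B ^ (2*m)) v‖ := real_inner_le_norm _ _
        _ = ‖(B ^ (2*m)) v‖ * ‖v‖ := mul_comm _ _
      have h3 : ‖B v‖ ^ (2 * m) * ‖v‖ ^ 2 ≤ (‖(B ^ (2*m)) v‖ * ‖v‖ ^ (2*m)) * ‖v‖ := by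
        calc ‖B v‖ ^ (2 * m) * ‖v‖ ^ 2 = (‖B v‖ ^ m * ‖v‖) ^ 2 := by ring
        _ ≤ (‖(B ^ m) v‖ * ‖v‖ ^ m) ^ 2 := h1
        _ = ‖(B ^ m) v‖ ^ 2 * ‖v‖ ^ (2 * m) := by ring
        _ ≤ (‖(B ^ (2*m)) v‖ * ‖v‖) * ‖v‖ ^ (2*m) := by
            apply mul_le_mul_of_nonneg_right h2 (by positivity)
        _ = (‖(B ^ (2*m)) v‖ * ‖v‖ ^ (2*m)) * ‖v‖ := by ring
      have h4 : 2 ^ (k + 1) = 2 * m := by rw [hm, pow_succ]; ring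
      rw [h4]
      refine le_of_mul_le_mul_right ?_ hvpos
      nlinarith [h3]
  intro v
  rcases eq_or_ne ‖v‖ 0 with hv | hv
  · have hv0 : v = 0 := norm_eq_zero.mp hv
    simp [hv0]
  have hvpos : 0 < ‖v‖ := lt_of_le_of_ne (norm_nonneg v) (Ne.symm hv)
  set s := L * ‖v‖ with hs
  have hsnn : 0 ≤ s := by positivity
  have hbound : ∀ k : ℕ, ‖B v‖ ≤ C ^ (((2:ℝ) ^ k))⁻¹ * s := by
    intro k
    have h1 : ‖B v‖ ^ (2^k) * ‖v‖ ≤ (C * s ^ (2^k)) * ‖v‖ := by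
      calc ‖B v‖ ^ (2^k) * ‖v‖ ≤ ‖(B ^ (2^k)) v‖ * ‖v‖ ^ (2^k) := key k v
      _ ≤ (C * L ^ (2^k) * ‖v‖) * ‖v‖ ^ (2^k) := by
          exact mul_le_mul_of_nonneg_right (hpow _ v) (by positivity)
      _ = (C * s ^ (2^k)) * ‖v‖ := by rw [hs, mul_pow]; ring
    have h2 : ‖B v‖ ^ (2^k) ≤ C * s ^ (2^k) := le_of_mul_le_mul_right h1 hvpos
    have h3 := Real.rpow_le_rpow (by positivity) h2 (by positivity : (0:ℝ) ≤ ((2:ℝ)^k)⁻¹)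
    have e1 : ((‖B v‖ ^ (2^k) : ℝ)) ^ (((2:ℝ)^k))⁻¹ = ‖B v‖ := by
      rw [← Real.rpow_natCast ‖B v‖ (2^k), ← Real.rpow_mul (norm_nonneg _)]
      push_cast
      rw [mul_inv_cancel₀ (by positivity), Real.rpow_one]
    have e2 : ((C * s ^ (2^k)) : ℝ) ^ (((2:ℝ)^k))⁻¹ = C ^ (((2:ℝ)^k))⁻¹ * s := by
      rw [Real.mul_rpow hC.le (by positivity)]
      congr 1
      rw [← Real.rpow_natCast s (2^k), ← Real.rpow_mul hsnn]
      push_cast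
      rw [mul_inv_cancel₀ (by positivity), Real.rpow_one]
    rwa [e1, e2] at h3
  have hlim : Filter.Tendsto (fun k : ℕ => C ^ (((2:ℝ) ^ k))⁻¹ * s) Filter.atTop (nhds s) := by
    have t1 : Filter.Tendsto (fun k : ℕ => (((2:ℝ) ^ k))⁻¹) Filter.atTop (nhds 0) :=
      Filter.Tendsto.comp tendsto_inv_atTop_zero
        (tendsto_pow_atTop_atTop_of_one_lt one_lt_two)
    have t2 : Filter.Tendsto (fun k : ℕ => C ^ (((2:ℝ) ^ k))⁻¹) Filter.atTop (nhds 1) := by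
      have := (Real.continuousAt_const_rpow (a := C) hC.ne').tendsto.comp t1
      simpa [Function.comp_def] using this
    simpa using t2.mul_const s
  exact ge_of_tendsto hlim (Filter.Eventually.of_forall hbound)

variable {n : ℕ} (ν : (Fin n → ℝ) → ℝ)
    (hν0 : ∀ x, ν x = 0 ↔ x = 0)
    (hνhom : ∀ (c : ℝ) (x), ν (c • x) = |c| * ν x)
    (hνadd : ∀ x y, ν (x + y) ≤ ν x + ν y)

lemma euclid_abs_le_norm (w : EuclideanSpace ℝ (Fin n)) (i : Fin n) : |w i| ≤ ‖w‖ := by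
  rw [EuclideanSpace.norm_eq, show |w i| = Real.sqrt ((w i)^2) from (Real.sqrt_sq_eq_abs _).symm]
  apply Real.sqrt_le_sqrt
  have := Finset.single_le_sum (f := fun j => ‖w j‖^2) (fun j _ => by positivity)
    (Finset.mem_univ i)
  simpa [Real.norm_eq_abs, sq_abs] using this

include hν0 hνhom hνadd

lemma nu_nonneg : ∀ x, 0 ≤ ν x := by
  intro x
  have h1 : ν (-x) = ν x := by
    have : (-x) = (-1 : ℝ) • x := by simp
    rw [this, hνhom]; simp
  have h0 : ν 0 = 0 := (hν0 0).mpr rfl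
  have := hνadd x (-x)
  simp [h1, h0] at this
  linarith

lemma nu_upper : ∃ c2 : ℝ, 0 ≤ c2 ∧ ∀ w : EuclideanSpace ℝ (Fin n), ν w ≤ c2 * ‖w‖ := by
  refine ⟨∑ i, ν (Pi.single i 1), Finset.sum_nonneg fun i _ => nu_nonneg ν hν0 hνhom hνadd _, ?_⟩
  intro w
  have hsum : ∀ (s : Finset (Fin n)) (x : Fin n → ℝ),
      ν (∑ i ∈ s, (x i : ℝ) • (Pi.single i (1:ℝ) : Fin n → ℝ))
      ≤ ∑ i ∈ s, |x i| * ν (Pi.single i 1) := by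
    intro s x
    induction s using Finset.induction with
    | empty => simp [(hν0 0).mpr rfl]
    | insert _ _ hx ih =>
      rename_i a s
      rw [Finset.sum_insert hx, Finset.sum_insert hx]
      calc ν ((x a : ℝ) • (Pi.single a (1:ℝ) : Fin n → ℝ)
              + ∑ i ∈ s, (x i : ℝ) • (Pi.single i (1:ℝ) : Fin n → ℝ))
          ≤ ν ((x a : ℝ) • (Pi.single a (1:ℝ) : Fin n → ℝ))
            + ν (∑ i ∈ s, (x i : ℝ) • (Pi.single i (1:ℝ) : Fin n → ℝ)) := hνadd _ _
        _ ≤ |x a| * ν (Pi.single a 1) + ∑ i ∈ s, |x i| * ν (Pi.single i 1) := by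
            rw [hνhom]; exact add_le_add_right ih _
  have hw : (w : Fin n → ℝ) = ∑ i, (w i : ℝ) • (Pi.single i (1:ℝ) : Fin n → ℝ) := by
    funext j
    simp [Finset.sum_apply, Pi.single_apply]
  calc ν w ≤ ∑ i, |w i| * ν (Pi.single i 1) := by
        rw [show ν w = ν (∑ i, (w i : ℝ) • (Pi.single i (1:ℝ) : Fin n → ℝ)) from by rw [← hw]]
        exact hsum _ _
    _ ≤ ∑ i, ‖w‖ * ν (Pi.single i 1) := by
        refine Finset.sum_le_sum fun i _ => ?_
        exact mul_le_mul_of_nonneg_right (euclid_abs_le_norm w i)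
          (nu_nonneg ν hν0 hνhom hνadd _)
    _ = (∑ i, ν (Pi.single i 1)) * ‖w‖ := by rw [Finset.sum_mul]; simp [mul_comm]

lemma nu_continuous : Continuous fun w : EuclideanSpace ℝ (Fin n) => ν w := by
  obtain ⟨c2, hc2, hub⟩ := nu_upper ν hν0 hνhom hνadd
  have hneg : ∀ x : Fin n → ℝ, ν (-x) = ν x := by
    intro x
    rw [show (-x) = (-1 : ℝ) • x from by simp, hνhom]; simp
  apply Metric.continuous_iff.mpr
  intro b ε hε
  rcases eq_or_lt_of_le hc2 with h | h
  · exact ⟨1, one_pos, fun a _ => by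
      have h1 := hub (a - b)
      have h2 := hub (b - a)
      have h3 := nu_nonneg ν hν0 hνhom hνadd ((a : Fin n → ℝ) - b)
      have h4 := nu_nonneg ν hν0 hνhom hνadd ((b : Fin n → ℝ) - a)
      have ha := hνadd ((a : Fin n → ℝ) - b) b
      have hb := hνadd ((b : Fin n → ℝ) - a) a
      simp only [sub_add_cancel] at ha hb
      rw [Real.dist_eq]
      rw [← h] at h1 h2
      simp at h1 h2
      rw [abs_lt]
      constructor <;> nlinarith⟩
  · refine ⟨ε / c2, by positivity, fun a hab => ?_⟩
    have h1 : ν ((a : Fin n → ℝ) - b) ≤ c2 * ‖a - b‖ := hub (a - b)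
    have ha := hνadd ((a : Fin n → ℝ) - b) b
    have hb := hνadd ((b : Fin n → ℝ) - a) a
    simp only [sub_add_cancel] at ha hb
    have h2 : ν ((b : Fin n → ℝ) - a) = ν ((a : Fin n → ℝ) - b) := by
      rw [show (b : Fin n → ℝ) - a = -((a : Fin n → ℝ) - b) from (neg_sub _ _).symm, hneg]
    rw [Real.dist_eq, abs_lt]
    have hd : ‖a - b‖ < ε / c2 := by rwa [← dist_eq_norm]
    have : c2 * ‖a - b‖ < ε := by
      rw [lt_div_iff₀ h] at hd; linarith [mul_comm c2 ‖a - b‖]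
    constructor <;> nlinarith

lemma nu_lower (hn : 0 < n) : ∃ c1 : ℝ, 0 < c1 ∧
    ∀ w : EuclideanSpace ℝ (Fin n), c1 * ‖w‖ ≤ ν w := by
  have hcont := nu_continuous ν hν0 hνhom hνadd
  have hsph : (Metric.sphere (0 : EuclideanSpace ℝ (Fin n)) 1).Nonempty := by
    refine ⟨EuclideanSpace.single ⟨0, hn⟩ 1, ?_⟩
    simp [EuclideanSpace.norm_single]
  obtain ⟨z, hz, hmin⟩ := (isCompact_sphere (0 : EuclideanSpace ℝ (Fin n)) 1).exists_isMinOn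
    hsph hcont.continuousOn
  have hz1 : ‖z‖ = 1 := by simpa using hz
  have hzne : (z : Fin n → ℝ) ≠ 0 := by
    intro h
    rw [show (z : EuclideanSpace ℝ (Fin n)) = 0 from (WithLp.ofLp_eq_zero 2).mp h] at hz1
    simp at hz1
  have hc1 : 0 < ν z := by
    rcases lt_or_eq_of_le (nu_nonneg ν hν0 hνhom hνadd z) with h | h
    · exact h
    · exact absurd ((hν0 z).mp h.symm) hzne
  refine ⟨ν z, hc1, fun w => ?_⟩
  rcases eq_or_ne (w : EuclideanSpace ℝ (Fin n)) 0 with h | h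
  · rw [h]
    simp [(hν0 0).mpr rfl]
  have hwn : 0 < ‖w‖ := norm_pos_iff.mpr h
  have hu : (‖w‖⁻¹ • w : EuclideanSpace ℝ (Fin n)) ∈
      Metric.sphere (0 : EuclideanSpace ℝ (Fin n)) 1 := by
    simp [norm_smul, abs_of_pos (inv_pos.mpr hwn), inv_mul_cancel₀ hwn.ne']
  have hν_scale : ν (‖w‖⁻¹ • (w : Fin n → ℝ)) = ‖w‖⁻¹ * ν w := by
    rw [hνhom]; rw [abs_of_pos (inv_pos.mpr hwn)]
  rw [isMinOn_iff] at hmin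
  have h2 := hmin _ hu
  rw [show (ν (‖w‖⁻¹ • w : EuclideanSpace ℝ (Fin n)) : ℝ) = ‖w‖⁻¹ * ν w from hν_scale] at h2
  calc ν z * ‖w‖ ≤ (‖w‖⁻¹ * ν w) * ‖w‖ := by nlinarith
    _ = ν w := by field_simp

end Aux

set_option maxHeartbeats 2000000 in
/-- discussion after Lemma 1 of the paper. Let `V : ℝⁿ → ℝ` be twice
continuously differentiable, and let its gradient `g` (defined via the Fréchet derivative,
`g x i = (fderiv ℝ V x) (eᵢ)`) be Lipschitz with constant `L` with respect to an arbitrary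
norm `ν` on `ℝⁿ` (given by its axioms). Then the gradient is Lipschitz with the same
constant `L` with respect to the Euclidean norm. -/
theorem gradient_euclidean_lipschitz_of_lipschitz
    (n : ℕ) (V : (Fin n → ℝ) → ℝ) (hV : ContDiff ℝ 2 V)
    (g : (Fin n → ℝ) → (Fin n → ℝ))
    (hg : ∀ x i, g x i = fderiv ℝ V x (Pi.single i 1))
    (ν : (Fin n → ℝ) → ℝ)
    (hν0 : ∀ x, ν x = 0 ↔ x = 0)
    (hνhom : ∀ (c : ℝ) (x), ν (c • x) = |c| * ν x)
    (hνadd : ∀ x y, ν (x + y) ≤ ν x + ν y)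
    (L : ℝ) (hL : ∀ x y, ν (g x - g y) ≤ L * ν (x - y)) :
    ∀ x y, Real.sqrt (∑ i, (g x i - g y i) ^ 2) ≤ L * Real.sqrt (∑ i, (x i - y i) ^ 2) := by
  rcases Nat.eq_zero_or_pos n with hn | hn
  · subst hn
    intro x y
    simp
  -- n > 0 from here on
  -- L is nonnegative
  have hL0 : 0 ≤ L := by
    set z : Fin n → ℝ := Pi.single ⟨0, hn⟩ 1 with hzdef
    have hzne : z ≠ 0 := by
      intro h
      have := congrFun h ⟨0, hn⟩
      simp [hzdef] at this
    have hνz : 0 < ν z := by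
      rcases lt_or_eq_of_le (nu_nonneg ν hν0 hνhom hνadd z) with h | h
      · exact h
      · exact absurd ((hν0 z).mp h.symm) hzne
    have h1 := hL z 0
    have h2 := nu_nonneg ν hν0 hνhom hνadd (g z - g 0)
    rw [sub_zero] at h1
    nlinarith
  -- derivatives
  have hVdiff : ∀ y, HasFDerivAt V (fderiv ℝ V y) y := fun y =>
    (hV.differentiable (by norm_num)).differentiableAt.hasFDerivAt
  have hf' : ContDiff ℝ 1 (fderiv ℝ V) := hV.fderiv_right (by norm_num)
  set T : ((Fin n → ℝ) →L[ℝ] ℝ) →L[ℝ] (Fin n → ℝ) :=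
    ContinuousLinearMap.pi (fun i => ContinuousLinearMap.apply ℝ ℝ (Pi.single i 1)) with hT
  have hgT : g = fun x => T (fderiv ℝ V x) := by
    funext x i
    rw [hg]
    simp [hT]
  set A : (Fin n → ℝ) → ((Fin n → ℝ) →L[ℝ] (Fin n → ℝ)) :=
    fun x => T.comp (fderiv ℝ (fderiv ℝ V) x) with hA
  have hAx : ∀ x, HasFDerivAt g (A x) x := by
    intro x
    rw [hgT]
    exact T.hasFDerivAt.comp x ((hf'.differentiable one_ne_zero x).hasFDerivAt)
  have hAapp : ∀ x u i, A x u i = (fderiv ℝ (fderiv ℝ V) x u) (Pi.single i 1) := by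
    intro x u i
    simp [hA, hT]
  have hdot : ∀ (φ : (Fin n → ℝ) →L[ℝ] ℝ) (v : Fin n → ℝ),
      φ v = ∑ i, v i * φ (Pi.single i 1) := by
    intro φ v
    conv_lhs => rw [show v = ∑ i, (v i : ℝ) • (Pi.single i (1:ℝ) : Fin n → ℝ) from by
      funext j; simp [Finset.sum_apply, Pi.single_apply]]
    rw [map_sum]
    simp [smul_eq_mul]
  have hsymdot : ∀ x (u v : Fin n → ℝ), ∑ i, A x u i * v i = ∑ i, u i * A x v i := by
    intro x u v
    have hsecond := second_derivative_symmetric (f := V) (f' := fderiv ℝ V)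
      (f'' := fderiv ℝ (fderiv ℝ V) x) hVdiff ((hf'.differentiable one_ne_zero x).hasFDerivAt)
    calc ∑ i, A x u i * v i = ∑ i, v i * (fderiv ℝ (fderiv ℝ V) x u) (Pi.single i 1) := by
          refine Finset.sum_congr rfl fun i _ => ?_
          rw [hAapp, mul_comm]
      _ = (fderiv ℝ (fderiv ℝ V) x u) v := (hdot _ v).symm
      _ = (fderiv ℝ (fderiv ℝ V) x v) u := hsecond u v
      _ = ∑ i, u i * A x v i := by
          rw [hdot _ u]
          exact Finset.sum_congr rfl fun i _ => by rw [hAapp]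
  -- directional derivative bound in the ν norm
  have hAν : ∀ x v, ν (A x v) ≤ L * ν v := by
    intro x v
    have hc : HasDerivAt (fun t : ℝ => x + t • v) v 0 := by
      simpa using ((hasDerivAt_id (0:ℝ)).smul_const v).const_add x
    have hline : HasDerivAt (fun t : ℝ => g (x + t • v)) (A x v) 0 := by
      have := (hAx (x + (0:ℝ) • v)).comp_hasDerivAt 0 hc
      simpa [Function.comp_def] using this
    have hslope := hasDerivAt_iff_tendsto_slope.mp hline
    have hν_cont : Continuous ν := by
      have h1 := nu_continuous ν hν0 hνhom hνadd
      exact h1.comp (PiLp.continuousLinearEquiv 2 ℝ (fun _ : Fin n => ℝ)).symm.continuous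
    have htend := (hν_cont.tendsto (A x v)).comp hslope
    refine le_of_tendsto htend ?_
    filter_upwards [self_mem_nhdsWithin] with t ht
    have ht0 : (t : ℝ) ≠ 0 := ht
    show ν (slope (fun t : ℝ => g (x + t • v)) 0 t) ≤ L * ν v
    have hsl : slope (fun t : ℝ => g (x + t • v)) 0 t
        = t⁻¹ • (g (x + t • v) - g x) := by
      rw [slope_def_module]
      simp
    rw [hsl, hνhom]
    have h1 : ν (g (x + t • v) - g x) ≤ L * (|t| * ν v) := by
      have := hL (x + t • v) x
      simpa [add_sub_cancel_left, hνhom] using this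
    calc |t⁻¹| * ν (g (x + t • v) - g x) ≤ |t⁻¹| * (L * (|t| * ν v)) :=
          mul_le_mul_of_nonneg_left h1 (abs_nonneg _)
      _ = L * ν v := by
          rw [abs_inv]
          have : |t| ≠ 0 := abs_ne_zero.mpr ht0
          field_simp
  -- norm equivalence constants
  obtain ⟨c2, hc2, hub⟩ := nu_upper ν hν0 hνhom hνadd
  obtain ⟨c1, hc1, hlb⟩ := nu_lower ν hν0 hνhom hνadd hn
  set C : ℝ := c1⁻¹ * c2 + 1 with hCdef
  have hC : 0 < C := by positivity
  set ψ := PiLp.continuousLinearEquiv 2 ℝ (fun _ : Fin n => ℝ) with hψ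
  set Bx : (Fin n → ℝ) → (EuclideanSpace ℝ (Fin n) →L[ℝ] EuclideanSpace ℝ (Fin n)) :=
    fun x => ((ψ.symm : (Fin n → ℝ) →L[ℝ] EuclideanSpace ℝ (Fin n)).comp
      ((A x).comp (ψ : EuclideanSpace ℝ (Fin n) →L[ℝ] (Fin n → ℝ)))) with hBx
  have hBapp : ∀ x (v : EuclideanSpace ℝ (Fin n)),
      ((Bx x) v : Fin n → ℝ) = A x (v : Fin n → ℝ) := fun _ _ => rfl
  have hBpow : ∀ x (m : ℕ) (v : EuclideanSpace ℝ (Fin n)),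
      (((Bx x) ^ m) v : Fin n → ℝ) = ((A x) ^ m) (v : Fin n → ℝ) := by
    intro x m
    induction m with
    | zero => intro v; rfl
    | succ k ih =>
      intro v
      have e1 : ((Bx x) ^ (k+1)) v = ((Bx x) ^ k) ((Bx x) v) := by
        rw [pow_succ, ContinuousLinearMap.mul_apply]
      have e2 : ((A x) ^ (k+1)) (v : Fin n → ℝ) = ((A x) ^ k) (A x (v : Fin n → ℝ)) := by
        rw [pow_succ, ContinuousLinearMap.mul_apply]
      rw [e1, e2, ← hBapp x v]
      exact ih ((Bx x) v)
  -- ν bound for powers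
  have hνpow : ∀ x (m : ℕ) (w : Fin n → ℝ), ν (((A x) ^ m) w) ≤ L ^ m * ν w := by
    intro x m w
    induction m with
    | zero => simp
    | succ k ih =>
      have e : ((A x) ^ (k+1)) w = A x (((A x) ^ k) w) := by
        rw [pow_succ', ContinuousLinearMap.mul_apply]
      rw [e]
      calc ν (A x (((A x) ^ k) w)) ≤ L * ν (((A x) ^ k) w) := hAν x _
        _ ≤ L * (L ^ k * ν w) := mul_le_mul_of_nonneg_left ih hL0
        _ = L ^ (k + 1) * ν w := by ring
  -- Euclidean norm bound for powers
  have hpowE : ∀ x (m : ℕ) (v : EuclideanSpace ℝ (Fin n)),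
      ‖((Bx x) ^ m) v‖ ≤ C * L ^ m * ‖v‖ := by
    intro x m v
    have h1 : c1 * ‖((Bx x) ^ m) v‖ ≤ ν (((Bx x) ^ m) v) := hlb _
    have h2 : ν ((((Bx x) ^ m) v : EuclideanSpace ℝ (Fin n))) =
        ν (((A x) ^ m) (v : Fin n → ℝ)) := by rw [hBpow]
    have h3 : ν (((A x) ^ m) (v : Fin n → ℝ)) ≤ L ^ m * ν (v : Fin n → ℝ) := hνpow x m _
    have h4 : ν (v : Fin n → ℝ) ≤ c2 * ‖v‖ := hub v
    have h5 : c1 * ‖((Bx x) ^ m) v‖ ≤ L ^ m * (c2 * ‖v‖) := by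
      calc c1 * ‖((Bx x) ^ m) v‖ ≤ ν (((A x) ^ m) (v : Fin n → ℝ)) := by rw [← h2]; exact h1
        _ ≤ L ^ m * ν (v : Fin n → ℝ) := h3
        _ ≤ L ^ m * (c2 * ‖v‖) := by
            exact mul_le_mul_of_nonneg_left h4 (by positivity)
    have h6 : ‖((Bx x) ^ m) v‖ ≤ c1⁻¹ * (L ^ m * (c2 * ‖v‖)) := by
      rw [← mul_le_mul_iff_right₀ hc1]
      calc c1 * ‖((Bx x) ^ m) v‖ ≤ L ^ m * (c2 * ‖v‖) := h5
        _ = c1 * (c1⁻¹ * (L ^ m * (c2 * ‖v‖))) := by field_simp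
    calc ‖((Bx x) ^ m) v‖ ≤ c1⁻¹ * (L ^ m * (c2 * ‖v‖)) := h6
      _ = (c1⁻¹ * c2) * L ^ m * ‖v‖ := by ring
      _ ≤ C * L ^ m * ‖v‖ := by
          refine mul_le_mul_of_nonneg_right ?_ (norm_nonneg v)
          refine mul_le_mul_of_nonneg_right ?_ (by positivity)
          rw [hCdef]
          linarith
  -- self-adjointness in the Euclidean inner product
  have hsymB : ∀ x (u v : EuclideanSpace ℝ (Fin n)), ⟪(Bx x) u, v⟫ = ⟪u, (Bx x) v⟫ := by
    intro x u v
    simp only [PiLp.inner_apply, RCLike.inner_apply, conj_trivial]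
    convert hsymdot x u v using 1 <;> exact Finset.sum_congr rfl fun i _ => mul_comm _ _
  -- operator norm bound
  have hopB : ∀ x : Fin n → ℝ, ‖Bx x‖ ≤ L := by
    intro x
    exact ContinuousLinearMap.opNorm_le_bound _ hL0
      (selfadj_pow_bound (Bx x) (hsymB x) C L hC hL0 (hpowE x))
  -- the gradient as a map on Euclidean space, and the mean value inequality
  set G : EuclideanSpace ℝ (Fin n) → EuclideanSpace ℝ (Fin n) :=
    fun w => ψ.symm (g (ψ w)) with hG
  have hGd : ∀ w, HasFDerivAt G (Bx (ψ w)) w := by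
    intro w
    exact (ψ.symm.hasFDerivAt).comp w ((hAx (ψ w)).comp w ψ.hasFDerivAt)
  have hMVT : ∀ a b : EuclideanSpace ℝ (Fin n), ‖G a - G b‖ ≤ L * ‖a - b‖ := by
    intro a b
    exact Convex.norm_image_sub_le_of_norm_fderiv_le
      (fun w _ => (hGd w).differentiableAt)
      (fun w _ => by rw [(hGd w).fderiv]; exact hopB (ψ w))
      convex_univ trivial trivial
  intro x y
  have hm := hMVT (ψ.symm x) (ψ.symm y)
  have e1 : ‖G (ψ.symm x) - G (ψ.symm y)‖ = Real.sqrt (∑ i, (g x i - g y i) ^ 2) := by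
    rw [EuclideanSpace.norm_eq]
    congr 1
    refine Finset.sum_congr rfl fun i _ => ?_
    have h : (G (ψ.symm x) - G (ψ.symm y)) i = g x i - g y i := rfl
    rw [h, Real.norm_eq_abs, sq_abs]
  have e2 : ‖(ψ.symm x : EuclideanSpace ℝ (Fin n)) - ψ.symm y‖
      = Real.sqrt (∑ i, (x i - y i) ^ 2) := by
    rw [EuclideanSpace.norm_eq]
    congr 1
    refine Finset.sum_congr rfl fun i _ => ?_
    have h : ((ψ.symm x : EuclideanSpace ℝ (Fin n)) - ψ.symm y) i = x i - y i := rfl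
    rw [h, Real.norm_eq_abs, sq_abs]
  rw [← e1, ← e2]
  exact hm
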